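/- Let f : ℝⁿ → ℝ be an irreducible polynomial such that every regular point of f on f⁻¹(0) has mean curvature equal to a constant H, and suppose f⁻¹(0) contains a regular point. Then there exists a polynomial p : ℝⁿ → ℝ such that (2|∇f|²Δf − ⟨∇|∇f|², ∇f⟩)² − 4(n−1)²H²|∇f|⁶ = p·f as polynomials. -/

import Mathlib

open MvPolynomial

/-- `|∇f|²` as a polynomial: the sum of the squares of the partial derivatives. -/
noncomputable def gradNormSq (n : ℕ) (f : MvPolynomial (Fin n) ℝ) : MvPolynomial (Fin n) ℝ :=
  ∑ i, (pderiv i f) ^ 2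

/-- `Δf` as a polynomial: the sum of the second partial derivatives. -/
noncomputable def lapPoly (n : ℕ) (f : MvPolynomial (Fin n) ℝ) : MvPolynomial (Fin n) ℝ :=
  ∑ i, pderiv i (pderiv i f)

/-- `⟨∇|∇f|², ∇f⟩` as a polynomial. -/
noncomputable def innerPoly (n : ℕ) (f : MvPolynomial (Fin n) ℝ) : MvPolynomial (Fin n) ℝ :=
  ∑ i, pderiv i (gradNormSq n f) * pderiv i f


/-- A multivariate real polynomial vanishing on a box is zero. -/
lemma mv_eq_zero_of_vanish_box : ∀ (m : ℕ) (p : MvPolynomial (Fin m) ℝ) (c : Fin m → ℝ) (ε : ℝ),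
    0 < ε → (∀ x : Fin m → ℝ, (∀ i, dist (x i) (c i) < ε) → MvPolynomial.eval x p = 0) → p = 0 := by
  intro m
  induction m with
  | zero =>
    intro p c ε hε h
    rw [p.eq_C_of_isEmpty]
    have := h c (fun i => i.elim0)
    rw [p.eq_C_of_isEmpty] at this
    simpa using this
  | succ m ih =>
    intro p c ε hε h
    have key : ∀ k, (finSuccEquiv ℝ m p).coeff k = 0 := by
      intro k
      apply ih _ (c ∘ Fin.succ) ε hε
      intro s hs
      have h2 : (finSuccEquiv ℝ m p).map (MvPolynomial.eval s) = 0 := by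
        apply Polynomial.eq_zero_of_infinite_isRoot
        apply Set.Infinite.mono ?_ (Set.Ioo_infinite (show c 0 - ε < c 0 + ε by linarith))
        intro y hy
        show Polynomial.IsRoot _ y
        rw [Polynomial.IsRoot, ← eval_eq_eval_mv_eval']
        apply h
        intro i
        refine Fin.cases ?_ (fun j => ?_) i
        · simp only [Fin.cons_zero, Real.dist_eq]
          rw [abs_sub_lt_iff]
          constructor <;> [linarith [hy.2]; linarith [hy.1]]
        · simpa using hs j
      have := congrArg (fun q => Polynomial.coeff q k) h2
      simpa [Polynomial.coeff_map] using this
    have hz : finSuccEquiv ℝ m p = 0 := Polynomial.ext fun k => by simp [key]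
    have := congrArg (finSuccEquiv ℝ m).symm hz
    simpa using this

lemma finSuccEquiv_pderiv_zero {m : ℕ} (p : MvPolynomial (Fin (m + 1)) ℝ) :
    finSuccEquiv ℝ m (pderiv 0 p) = Polynomial.derivative (finSuccEquiv ℝ m p) := by
  induction p using MvPolynomial.induction_on with
  | C a => simp [finSuccEquiv_apply]
  | add p q hp hq => simp [hp, hq]
  | mul_X p i hp =>
    refine Fin.cases ?_ (fun j => ?_) i
    · rw [pderiv_mul, pderiv_X_self, map_add, map_mul, map_mul, hp, finSuccEquiv_X_zero,
        map_one, map_mul, finSuccEquiv_X_zero, Polynomial.derivative_mul,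
        Polynomial.derivative_X]
    · rw [pderiv_mul, pderiv_X_of_ne (Fin.succ_ne_zero j), map_add, map_mul, map_mul, hp,
        finSuccEquiv_X_succ, map_zero, map_mul, finSuccEquiv_X_succ, Polynomial.derivative_mul,
        Polynomial.derivative_C]

lemma sign_change {q : Polynomial ℝ} {t : ℝ} (h0 : q.eval t = 0) (h1 : q.derivative.eval t ≠ 0) :
    ∃ ε > 0, q.eval (t - ε) * q.eval (t + ε) < 0 := by
  set c := q.derivative.eval t with hc
  have hq : HasDerivAt (fun y => q.eval y) c t := q.hasDerivAt t
  rw [hasDerivAt_iff_tendsto_slope] at hq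
  have hev : ∀ᶠ y in nhdsWithin t {t}ᶜ, |slope (fun y => q.eval y) t y - c| < |c| := by
    have hmem := hq (Metric.ball_mem_nhds c (abs_pos.mpr h1))
    filter_upwards [hmem] with y hy
    simpa [Real.dist_eq] using hy
  rw [eventually_nhdsWithin_iff, Metric.eventually_nhds_iff] at hev
  obtain ⟨δ, hδ, hδ'⟩ := hev
  refine ⟨δ / 2, by linarith, ?_⟩
  have hp1 := hδ' (y := t + δ / 2)
    (by rw [Real.dist_eq, show t + δ / 2 - t = δ / 2 by ring, abs_of_pos (by linarith)]; linarith)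
    (by simp only [Set.mem_compl_iff, Set.mem_singleton_iff]; intro h; linarith)
  have hm1 := hδ' (y := t - δ / 2)
    (by rw [Real.dist_eq, show t - δ / 2 - t = -(δ / 2) by ring, abs_of_neg (by linarith)]; linarith)
    (by simp only [Set.mem_compl_iff, Set.mem_singleton_iff]; intro h; linarith)
  set sp := slope (fun y => q.eval y) t (t + δ / 2) with hsp
  set sm := slope (fun y => q.eval y) t (t - δ / 2) with hsm
  have ep : q.eval (t + δ / 2) = sp * (δ / 2) := by
    rw [hsp, slope_def_field, h0, sub_zero, show t + δ / 2 - t = δ / 2 by ring]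
    field_simp
  have em : q.eval (t - δ / 2) = sm * (-(δ / 2)) := by
    rw [hsm, slope_def_field, h0, sub_zero, show t - δ / 2 - t = -(δ / 2) by ring]
    field_simp
  have hss : sp * sm > 0 := by
    rcases lt_or_gt_of_ne h1 with hneg | hpos
    · rw [abs_of_neg hneg] at hp1 hm1
      rw [abs_sub_lt_iff] at hp1 hm1
      have h1 : sp < 0 := by linarith [hp1.2]
      have h2 : sm < 0 := by linarith [hm1.2]
      nlinarith
    · rw [abs_of_pos hpos] at hp1 hm1
      rw [abs_sub_lt_iff] at hp1 hm1
      have h1 : sp > 0 := by linarith [hp1.1]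
      have h2 : sm > 0 := by linarith [hm1.1]
      nlinarith
  rw [ep, em]
  have hpos : sp * sm * (δ / 2 * (δ / 2)) > 0 :=
    mul_pos hss (by positivity)
  nlinarith [hpos]
open scoped nonZeroDivisors
set_option maxHeartbeats 1000000
set_option synthInstance.maxHeartbeats 400000

lemma dvd_of_vanishing (m : ℕ) (f g : MvPolynomial (Fin (m + 1)) ℝ)
    (hirr : Irreducible f) (x₀ : Fin (m + 1) → ℝ) (hf0 : MvPolynomial.eval x₀ f = 0)
    (hd : MvPolynomial.eval x₀ (pderiv 0 f) ≠ 0)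
    (hg : ∀ x, MvPolynomial.eval x f = 0 → MvPolynomial.eval x g = 0) : f ∣ g := by
  classical
  set R := MvPolynomial (Fin m) ℝ
  letI : NormalizationMonoid R := UniqueFactorizationMonoid.strongNormalizationMonoid.toNormalizationMonoid
  letI : NormalizedGCDMonoid R := UniqueFactorizationMonoid.toNormalizedGCDMonoid R
  set K := FractionRing R
  set e := MvPolynomial.finSuccEquiv ℝ m with he
  set F := e f with hF
  set G := e g with hG
  have hpd : pderiv 0 f ≠ 0 := fun h => hd (by simp [h])
  have hdeg : 1 ≤ F.natDegree := by
    rw [hF, he, natDegree_finSuccEquiv]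
    rcases Nat.eq_zero_or_pos (degreeOf 0 f) with h | h
    · exfalso
      apply hpd
      apply pderiv_eq_zero_of_notMem_vars
      intro hv
      rw [mem_vars] at hv
      obtain ⟨d', hd', h0d⟩ := hv
      have hle := monomial_le_degreeOf 0 hd'
      rw [h] at hle
      rw [Finsupp.mem_support_iff] at h0d
      omega
    · exact h
  have hFirr : Irreducible F := (MulEquiv.irreducible_iff e (x := f)).mpr hirr
  have hF0 : F ≠ 0 := hFirr.ne_zero
  have hFprim : F.IsPrimitive := by
    intro r hr
    obtain ⟨q, hq⟩ := hr
    rcases hFirr.isUnit_or_isUnit hq with h | h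
    · exact Polynomial.isUnit_C.mp h
    · exfalso
      have hr0 : Polynomial.C r ≠ 0 := fun h' => hF0 (by rw [hq, h', zero_mul])
      have hq0 : q ≠ 0 := fun h' => hF0 (by rw [hq, h', mul_zero])
      have := Polynomial.natDegree_mul hr0 hq0
      rw [← hq, Polynomial.natDegree_C, Polynomial.natDegree_eq_zero_of_isUnit h] at this
      omega
  have hFK : Irreducible (F.map (algebraMap R K)) :=
    hFprim.irreducible_iff_irreducible_map_fraction_map.mp hFirr
  -- evaluation of the equivalence
  have hEe : ∀ (x : Fin (m + 1) → ℝ) (p : MvPolynomial (Fin (m + 1)) ℝ),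
      Polynomial.eval (x 0) ((e p).map (MvPolynomial.eval (x ∘ Fin.succ))) =
        MvPolynomial.eval x p := by
    intro x p
    rw [he, ← eval_eq_eval_mv_eval']
    exact congrArg (fun z => MvPolynomial.eval z p) (Fin.cons_self_tail x)
  have smul_eq : ∀ (r : R) (p : Polynomial K), r • p = Polynomial.C (algebraMap R K r) * p := by
    intro r p
    rw [← algebraMap_smul K r p, Polynomial.smul_eq_C_mul]
  by_cases hdvd : F.map (algebraMap R K) ∣ G.map (algebraMap R K)
  · -- then F ∣ G in R[X], hence f ∣ g
    obtain ⟨h, hh⟩ := hdvd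
    obtain ⟨b, hb⟩ := IsLocalization.integerNormalization_map_to_map R⁰ h
    set Hp := IsLocalization.integerNormalization R⁰ h with hHp
    have heq : Polynomial.C (b : R) * G = F * Hp := by
      apply Polynomial.map_injective _ (IsFractionRing.injective R K)
      rw [Polynomial.map_mul, Polynomial.map_mul, hb, Polynomial.map_C, hh, smul_eq]
      ring
    have hFprime : Prime F := UniqueFactorizationMonoid.irreducible_iff_prime.mp hFirr
    rcases (hFprime.2.2 (Polynomial.C (b : R)) G ⟨Hp, heq⟩) with h1 | h1
    · exfalso
      have hb0 : (Polynomial.C (b : R)) ≠ 0 := by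
        simp only [Ne, Polynomial.C_eq_zero]
        exact nonZeroDivisors.coe_ne_zero b
      have hdle := Polynomial.degree_le_of_dvd h1 hb0
      rw [Polynomial.degree_C (nonZeroDivisors.coe_ne_zero b)] at hdle
      have hnd : F.natDegree ≤ 0 := Polynomial.natDegree_le_iff_degree_le.mpr (by simpa using hdle)
      omega
    · obtain ⟨q, hq⟩ := h1
      refine ⟨e.symm q, ?_⟩
      apply e.injective
      rw [map_mul, ← hF, AlgEquiv.apply_symm_apply, ← hG, hq]
  · exfalso
    have hcop : IsCoprime (F.map (algebraMap R K)) (G.map (algebraMap R K)) :=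
      hFK.coprime_iff_not_dvd.mpr hdvd
    obtain ⟨a, b, hab⟩ := hcop
    obtain ⟨da, hda⟩ := IsLocalization.integerNormalization_map_to_map R⁰ a
    obtain ⟨db, hdb⟩ := IsLocalization.integerNormalization_map_to_map R⁰ b
    set A := IsLocalization.integerNormalization R⁰ a with hA
    set B := IsLocalization.integerNormalization R⁰ b with hB
    set d : R := (da : R) * db with hdd
    have hd0 : d ≠ 0 := mul_ne_zero (nonZeroDivisors.coe_ne_zero da) (nonZeroDivisors.coe_ne_zero db)
    have key : Polynomial.C (db : R) * A * F + Polynomial.C (da : R) * B * G = Polynomial.C d := by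
      apply Polynomial.map_injective _ (IsFractionRing.injective R K)
      simp only [Polynomial.map_add, Polynomial.map_mul, Polynomial.map_C]
      rw [hda, hdb, smul_eq, smul_eq, hdd, map_mul, Polynomial.C_mul]
      have : Polynomial.C (algebraMap R K (da : R)) * Polynomial.C (algebraMap R K (db : R)) *
          (a * Polynomial.map (algebraMap R K) F + b * Polynomial.map (algebraMap R K) G) =
          Polynomial.C (algebraMap R K (da : R)) * Polynomial.C (algebraMap R K (db : R)) := by
        rw [hab, mul_one]
      rw [← this]
      ring
    -- d vanishes wherever f vanishes
    have hvan : ∀ x : Fin (m + 1) → ℝ, MvPolynomial.eval x f = 0 →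
        MvPolynomial.eval (x ∘ Fin.succ) d = 0 := by
      intro x hx
      have hcongr := congrArg
        (fun q : Polynomial R => Polynomial.eval (x 0) (q.map (MvPolynomial.eval (x ∘ Fin.succ)))) key
      simp only [Polynomial.map_add, Polynomial.map_mul, Polynomial.eval_add, Polynomial.eval_mul,
        Polynomial.map_C, Polynomial.eval_C] at hcongr
      rw [hEe x f, hEe x g, hx, hg x hx, mul_zero, mul_zero, add_zero] at hcongr
      exact hcongr.symm
    -- now find a box on which d vanishes
    set t₀ := x₀ 0 with ht₀
    set s₀ : Fin m → ℝ := x₀ ∘ Fin.succ with hs₀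
    set q₀ : Polynomial ℝ := (e f).map (MvPolynomial.eval s₀) with hq₀
    have hq₀t : q₀.eval t₀ = 0 := by
      rw [hq₀, ht₀, hs₀, hEe x₀ f]; exact hf0
    have hder : e (pderiv 0 f) = Polynomial.derivative (e f) := finSuccEquiv_pderiv_zero f
    have hq₀d : q₀.derivative.eval t₀ ≠ 0 := by
      rw [hq₀, Polynomial.derivative_map, ← hder, ht₀, hs₀, hEe x₀ (pderiv 0 f)]
      exact hd
    obtain ⟨ε, hε, hsign⟩ := sign_change hq₀t hq₀d
    -- continuity of the product of endpoint values
    have hconsC : ∀ y : ℝ, Continuous fun s : Fin m → ℝ => (Fin.cons y s : Fin (m + 1) → ℝ) := by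
      intro y
      refine continuous_pi fun j => ?_
      refine Fin.cases ?_ (fun k => ?_) j
      · simpa using continuous_const
      · simpa using continuous_apply k
    set W : (Fin m → ℝ) → ℝ := fun s =>
      MvPolynomial.eval (Fin.cons (t₀ - ε) s) f * MvPolynomial.eval (Fin.cons (t₀ + ε) s) f with hW
    have hWc : Continuous W := by
      apply Continuous.mul
      · exact (MvPolynomial.continuous_eval f).comp (hconsC (t₀ - ε))
      · exact (MvPolynomial.continuous_eval f).comp (hconsC (t₀ + ε))
    have hWs₀ : W s₀ < 0 := by
      have e1 : MvPolynomial.eval (Fin.cons (t₀ - ε) s₀) f = q₀.eval (t₀ - ε) := by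
        rw [hq₀, he, eval_eq_eval_mv_eval']
      have e2 : MvPolynomial.eval (Fin.cons (t₀ + ε) s₀) f = q₀.eval (t₀ + ε) := by
        rw [hq₀, he, eval_eq_eval_mv_eval']

      rw [hW]; dsimp only; rw [e1, e2]; exact hsign
    have hev : ∀ᶠ s in nhds s₀, W s < 0 := by
      have := hWc.continuousAt (x := s₀)
      exact this.eventually_lt continuousAt_const hWs₀
    rw [Metric.eventually_nhds_iff] at hev
    obtain ⟨ε', hε', hball⟩ := hev
    -- d vanishes on the box of radius ε' around s₀
    have hvanbox : ∀ s : Fin m → ℝ, (∀ i, dist (s i) (s₀ i) < ε') → MvPolynomial.eval s d = 0 := by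
      intro s hs
      have hWs : W s < 0 := hball ((dist_pi_lt_iff hε').mpr hs)
      -- IVT to find a root
      have hcont : ContinuousOn (fun y => MvPolynomial.eval (Fin.cons y s) f)
          (Set.Icc (t₀ - ε) (t₀ + ε)) := by
        apply Continuous.continuousOn
        exact (MvPolynomial.continuous_eval f).comp (by
          refine continuous_pi fun j => ?_
          refine Fin.cases ?_ (fun k => ?_) j
          · simpa using continuous_id'
          · simpa using continuous_const)
      have hle : t₀ - ε ≤ t₀ + ε := by linarith
      have : ∃ y, MvPolynomial.eval (Fin.cons y s) f = 0 := by
        rcases mul_neg_iff.mp hWs with ⟨h1, h2⟩ | ⟨h1, h2⟩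
        · have := intermediate_value_Icc' hle hcont
          have h0mem : (0:ℝ) ∈ Set.Icc (MvPolynomial.eval (Fin.cons (t₀ + ε) s) f)
              (MvPolynomial.eval (Fin.cons (t₀ - ε) s) f) := ⟨le_of_lt h2, le_of_lt h1⟩
          obtain ⟨y, _, hy⟩ := this h0mem
          exact ⟨y, hy⟩
        · have := intermediate_value_Icc hle hcont
          have h0mem : (0:ℝ) ∈ Set.Icc (MvPolynomial.eval (Fin.cons (t₀ - ε) s) f)
              (MvPolynomial.eval (Fin.cons (t₀ + ε) s) f) := ⟨le_of_lt h1, le_of_lt h2⟩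
          obtain ⟨y, _, hy⟩ := this h0mem
          exact ⟨y, hy⟩
      obtain ⟨y, hy⟩ := this
      have := hvan (Fin.cons y s) hy
      have htail : (Fin.cons y s : Fin (m + 1) → ℝ) ∘ Fin.succ = s := by
        funext i; simp
      rwa [htail] at this
    have : d = 0 := mv_eq_zero_of_vanish_box m d s₀ ε' hε' hvanbox
    exact hd0 this

/-- if `f` is an irreducible real polynomial in `n` variables whose zero
set contains a regular point and whose regular level set has constant mean curvature
`H` (i.e. `2|∇f|²Δf − ⟨∇|∇f|²,∇f⟩ = 2(n−1)H|∇f|³` at every regular zero of `f`),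
then there is a polynomial `p` with
`(2|∇f|²Δf − ⟨∇|∇f|²,∇f⟩)² − 4(n−1)²H²|∇f|⁶ = p·f` as polynomials. -/
theorem cmc_polynomial_identity (n : ℕ) (hn : 2 ≤ n) (f : MvPolynomial (Fin n) ℝ)
    (hirr : Irreducible f) (H : ℝ)
    (hreg : ∃ x : Fin n → ℝ, eval x f = 0 ∧ eval x (gradNormSq n f) ≠ 0)
    (hcmc : ∀ x : Fin n → ℝ, eval x f = 0 → eval x (gradNormSq n f) ≠ 0 →
      eval x (2 * gradNormSq n f * lapPoly n f - innerPoly n f) =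
        2 * ((n : ℝ) - 1) * H * Real.sqrt (eval x (gradNormSq n f)) ^ 3) :
    ∃ p : MvPolynomial (Fin n) ℝ,
      (2 * gradNormSq n f * lapPoly n f - innerPoly n f) ^ 2 -
          C (4 * ((n : ℝ) - 1) ^ 2 * H ^ 2) * (gradNormSq n f) ^ 3 = p * f := by
  obtain ⟨x₀, hx0, hxg⟩ := hreg
  set g := (2 * gradNormSq n f * lapPoly n f - innerPoly n f) ^ 2 -
      C (4 * ((n : ℝ) - 1) ^ 2 * H ^ 2) * (gradNormSq n f) ^ 3 with hgdef
  have hSnn : ∀ x : Fin n → ℝ, 0 ≤ eval x (gradNormSq n f) := by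
    intro x
    rw [gradNormSq, map_sum]
    exact Finset.sum_nonneg fun i _ => by rw [map_pow]; exact sq_nonneg _
  have hgv : ∀ x : Fin n → ℝ, eval x f = 0 → eval x g = 0 := by
    intro x hx
    rw [hgdef, map_sub, map_pow, map_mul, map_pow, eval_C]
    by_cases hS : eval x (gradNormSq n f) = 0
    · have hsum : ∑ i, (eval x (pderiv i f)) ^ 2 = 0 := by
        rw [gradNormSq, map_sum] at hS
        simpa [map_pow] using hS
      have hz : ∀ i, eval x (pderiv i f) = 0 := by
        intro i
        have hi0 := (Finset.sum_eq_zero_iff_of_nonneg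
          (fun i _ => sq_nonneg (eval x (pderiv i f)))).mp hsum i (Finset.mem_univ i)
        exact (pow_eq_zero_iff (by norm_num : (2:ℕ) ≠ 0)).mp hi0
      have hinner : eval x (innerPoly n f) = 0 := by
        rw [innerPoly, map_sum]
        apply Finset.sum_eq_zero
        intro i _
        rw [map_mul, hz i, mul_zero]
      rw [map_sub, map_mul, map_mul, hS, hinner]
      ring
    · have hc := hcmc x hx hS
      rw [hc]
      set t := Real.sqrt (eval x (gradNormSq n f)) with htdef
      have ht2 : t ^ 2 = eval x (gradNormSq n f) := Real.sq_sqrt (hSnn x)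
      rw [← ht2]
      ring
  have hex : ∃ i, eval x₀ (pderiv i f) ≠ 0 := by
    by_contra hcon
    push_neg at hcon
    apply hxg
    rw [gradNormSq, map_sum]
    apply Finset.sum_eq_zero
    intro i _
    rw [map_pow, hcon i]
    ring
  obtain ⟨i, hi⟩ := hex
  obtain ⟨m, rfl⟩ : ∃ m, n = m + 1 := ⟨n - 1, by omega⟩
  set σe := Equiv.swap (0 : Fin (m + 1)) i with hσe
  have hcomp : ∀ x : Fin (m + 1) → ℝ, (x ∘ ⇑σe) ∘ ⇑σe = x := by
    intro x; funext j
    simp [hσe, Function.comp, Equiv.swap_apply_self]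
  have hdvd : rename (⇑σe) f ∣ rename (⇑σe) g := by
    apply dvd_of_vanishing m (rename (⇑σe) f) (rename (⇑σe) g) ?_ (x₀ ∘ ⇑σe) ?_ ?_ ?_
    · have := (MulEquiv.irreducible_iff (renameEquiv ℝ σe)).mpr hirr
      simpa using this
    · rw [eval_rename, hcomp]; exact hx0
    · rw [show (0 : Fin (m + 1)) = σe i from (Equiv.swap_apply_right 0 i).symm,
        pderiv_rename σe.injective, eval_rename, hcomp]
      exact hi
    · intro x hx
      rw [eval_rename] at hx ⊢
      exact hgv _ hx
  obtain ⟨q, hq⟩ := hdvd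
  have h2 := congrArg (rename (⇑σe.symm)) hq
  rw [map_mul] at h2
  simp only [rename_rename, Equiv.symm_comp_self, rename_id, AlgHom.id_apply] at h2
  exact ⟨rename (⇑σe.symm) q, by rw [h2, mul_comm]⟩
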